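/- In any chopped vertical strip on d nodes, the number of visible pairs is at least d−1; equivalently, the visibility graph (vertices z₁,...,z_d, edges the visible pairs) is connected, hence has at least d−1 edges. -/

import Mathlib

open Complex Set

/-- The vertical ray (cut) at point `p`, going up if `b = true`, down otherwise. -/
def cutRay (p : ℂ) (b : Bool) : Set ℂ :=
  {w : ℂ | ∃ t : ℝ, 0 < t ∧ w = p + Complex.I * (if b then (t : ℂ) else -(t : ℂ))}

/-- The union of the cuts of a chopped vertical strip: one vertical ray at each
interior node `z j`, `j = 2, ..., d-1` (in `Fin d` indexing: `0 < j < d - 1`). -/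
def cutSet (d : ℕ) (z : Fin d → ℂ) (dir : Fin d → Bool) : Set ℂ :=
  ⋃ j ∈ {j : Fin d | (j : ℕ) ≠ 0 ∧ (j : ℕ) ≠ d - 1}, cutRay (z j) (dir j)

/-- The pair `(i, j)` is visible if the open segment from `z i` to `z j`
meets none of the cuts. -/
def Visible (d : ℕ) (z : Fin d → ℂ) (dir : Fin d → Bool) (i j : Fin d) : Prop :=
  openSegment ℝ (z i) (z j) ∩ cutSet d z dir = ∅

/-- The number of visible pairs `(i, j)`, `i < j`, of a chopped vertical strip. -/
noncomputable def visibleCount (d : ℕ) (z : Fin d → ℂ) (dir : Fin d → Bool) : ℕ :=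
  Nat.card {p : Fin d × Fin d // p.1 < p.2 ∧ Visible d z dir p.1 p.2}

/-- The visibility graph of a chopped vertical strip is connected, hence the number of
visible pairs is at least `d - 1`. -/
lemma visible_consec (d : ℕ) (z : Fin d → ℂ) (dir : Fin d → Bool)
    (hre : StrictMono fun i => (z i).re) (n : ℕ) (hn : n + 1 < d) :
    Visible d z dir ⟨n, Nat.lt_of_succ_lt hn⟩ ⟨n+1, hn⟩ := by
  set i : Fin d := ⟨n, Nat.lt_of_succ_lt hn⟩
  set j : Fin d := ⟨n+1, hn⟩
  unfold Visible
  ext w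
  simp only [mem_inter_iff, mem_empty_iff_false, iff_false]
  rintro ⟨hseg, hcut⟩
  obtain ⟨a, b, ha, hb, hab, hw⟩ := hseg
  have hij : (z i).re < (z j).re := hre (show i < j by simp [i, j, Fin.lt_def])
  have hwre : w.re = a * (z i).re + b * (z j).re := by
    rw [← hw]; simp [Complex.add_re, Complex.real_smul, Complex.mul_re]
  have hwre' : w.re = (z i).re + b * ((z j).re - (z i).re) := by
    rw [hwre]; linear_combination (z i).re * hab
  have h1 : (z i).re < w.re := by nlinarith [mul_pos hb (sub_pos.mpr hij)]
  have hwre'' : w.re = (z j).re - a * ((z j).re - (z i).re) := by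
    rw [hwre]; linear_combination (z j).re * hab
  have h2 : w.re < (z j).re := by nlinarith [mul_pos ha (sub_pos.mpr hij)]
  simp only [cutSet, mem_iUnion, mem_setOf_eq] at hcut
  obtain ⟨k, ⟨hk0, hk1⟩, t, ht, hwk⟩ := hcut
  have hwk' : w.re = (z k).re := by
    rw [hwk]; cases dir k <;> simp [Complex.add_re, Complex.mul_re]
  rw [hwk'] at h1 h2
  have hik : i < k := by have := hre.lt_iff_lt.mp h1; exact this
  have hkj : k < j := hre.lt_iff_lt.mp h2
  simp only [Fin.lt_def, i, j] at hik hkj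
  omega


theorem stmt1 (d : ℕ) (hd : 1 ≤ d) (z : Fin d → ℂ) (dir : Fin d → Bool)
    (hre : StrictMono fun i => (z i).re)
    (him : Function.Injective fun i => (z i).im) :
    (SimpleGraph.fromRel (Visible d z dir)).Connected ∧
    d - 1 ≤ Nat.card {p : Fin d × Fin d // p.1 < p.2 ∧ Visible d z dir p.1 p.2} := by
  have hadj : ∀ n (hn : n + 1 < d),
      (SimpleGraph.fromRel (Visible d z dir)).Adj ⟨n, Nat.lt_of_succ_lt hn⟩ ⟨n+1, hn⟩ := by
    intro n hn
    refine ⟨?_, Or.inl (visible_consec d z dir hre n hn)⟩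
    simp [Fin.ext_iff]
  have key : ∀ n (h : n < d),
      (SimpleGraph.fromRel (Visible d z dir)).Reachable ⟨0, hd⟩ ⟨n, h⟩ := by
    intro n
    induction n with
    | zero => intro h; exact SimpleGraph.Reachable.refl _
    | succ m ih =>
      intro h
      exact (ih (Nat.lt_of_succ_lt h)).trans (hadj m h).reachable
  constructor
  · rw [SimpleGraph.connected_iff]
    refine ⟨?_, ⟨⟨0, hd⟩⟩⟩
    intro u v
    have hu := key u.val u.isLt
    have hv := key v.val v.isLt
    simp only [Fin.eta] at hu hv
    exact hu.symm.trans hv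
  · have hinj : Function.Injective (fun m : Fin (d-1) =>
        (⟨(⟨m.val, by omega⟩, ⟨m.val+1, by omega⟩),
          by simp [Fin.lt_def],
          visible_consec d z dir hre m.val (by omega)⟩ :
          {p : Fin d × Fin d // p.1 < p.2 ∧ Visible d z dir p.1 p.2})) := by
      intro a b hab
      simp only [Subtype.mk_eq_mk, Prod.mk.injEq, Fin.mk.injEq] at hab
      exact Fin.ext hab.1
    calc d - 1 = Nat.card (Fin (d-1)) := by simp
      _ ≤ _ := Nat.card_le_card_of_injective _ hinj
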